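/- (Asymptotics of the Pearcey-like integral, eq. (asy)) As θ → ∞, 𝒫(θ) = √(4π/θ) ( 1 + 7/(6θ) + O(θ^{-2}) ), where 𝒫(θ) := ∫_{-∞}^{∞} exp( -θ( y²/4 + y³/6 + y⁴/24 ) ) dy. -/

import Mathlib

open MeasureTheory Real Filter Asymptotics

set_option maxHeartbeats 1000000

private lemma nonneg_of_deriv {f f' : ℝ → ℝ} (h0 : f 0 = 0)
    (hd : ∀ x, HasDerivAt f (f' x) x) (hpos : ∀ x, 0 ≤ x → 0 ≤ f' x) :
    ∀ x, 0 ≤ x → 0 ≤ f x := by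
  intro x hx
  have hmono : MonotoneOn f (Set.Ici (0:ℝ)) := by
    refine monotoneOn_of_deriv_nonneg (convex_Ici 0)
      (fun y _ => (hd y).differentiableAt.continuousAt.continuousWithinAt)
      (fun y _ => (hd y).differentiableAt.differentiableWithinAt) ?_
    intro y hy
    rw [interior_Ici] at hy
    rw [(hd y).deriv]
    exact hpos y hy.le
  have := hmono (Set.self_mem_Ici) hx hx
  rwa [h0] at this

private lemma sinh_le_mul_cosh (b : ℝ) (hb : 0 ≤ b) : Real.sinh b ≤ b * Real.cosh b := by
  have := nonneg_of_deriv (f := fun b => b * Real.cosh b - Real.sinh b)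
    (f' := fun b => b * Real.sinh b) (by simp)
    (fun x => by
      have h := ((hasDerivAt_id x).mul (Real.hasDerivAt_cosh x)).sub (Real.hasDerivAt_sinh x)
      refine h.congr_deriv ?_; simp only [id_eq]; ring)
    (fun x hx => by exact mul_nonneg hx (Real.sinh_nonneg_iff.2 hx)) b hb
  linarith

private lemma cosh_sub_one_le (b : ℝ) (hb : 0 ≤ b) :
    Real.cosh b - 1 ≤ b^2/2 * Real.cosh b := by
  have := nonneg_of_deriv (f := fun b => b^2/2 * Real.cosh b - Real.cosh b + 1)
    (f' := fun b => (b * Real.cosh b - Real.sinh b) + b^2/2 * Real.sinh b) (by simp)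
    (fun x => by
      have h := ((((hasDerivAt_pow 2 x).div_const 2).mul (Real.hasDerivAt_cosh x)).sub
        (Real.hasDerivAt_cosh x)).add_const 1
      refine h.congr_deriv ?_; push_cast; ring)
    (fun x hx => by
      have h1 := sinh_le_mul_cosh x hx
      have h2 : 0 ≤ x^2/2 * Real.sinh x :=
        mul_nonneg (by positivity) (Real.sinh_nonneg_iff.2 hx)
      linarith) b hb
  linarith

private lemma sinh_sub_le (b : ℝ) (hb : 0 ≤ b) :
    Real.sinh b - b ≤ b^3/6 * Real.cosh b := by
  have := nonneg_of_deriv (f := fun b => b^3/6 * Real.cosh b + b - Real.sinh b)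
    (f' := fun b => (b^2/2 * Real.cosh b - Real.cosh b + 1) + b^3/6 * Real.sinh b) (by simp)
    (fun x => by
      have h := ((((hasDerivAt_pow 3 x).div_const 6).mul (Real.hasDerivAt_cosh x)).add
        (hasDerivAt_id x)).sub (Real.hasDerivAt_sinh x)
      refine h.congr_deriv ?_; push_cast; ring)
    (fun x hx => by
      have h1 := cosh_sub_one_le x hx
      have h2 : 0 ≤ x^3/6 * Real.sinh x :=
        mul_nonneg (by positivity) (Real.sinh_nonneg_iff.2 hx)
      linarith) b hb
  linarith

private lemma cosh_quad_remainder (b : ℝ) :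
    Real.cosh b - 1 - b^2/2 ≤ b^4/24 * Real.cosh b := by
  wlog hb : 0 ≤ b with H
  · have := H (-b) (by linarith [le_of_not_ge hb])
    have h4 : (-b)^4 = b^4 := by ring
    have h2 : (-b)^2 = b^2 := by ring
    rwa [Real.cosh_neg, h4, h2] at this
  have := nonneg_of_deriv (f := fun b => b^4/24 * Real.cosh b - Real.cosh b + 1 + b^2/2)
    (f' := fun b => (b^3/6 * Real.cosh b + b - Real.sinh b) + b^4/24 * Real.sinh b) (by simp)
    (fun x => by
      have h := (((((hasDerivAt_pow 4 x).div_const 24).mul (Real.hasDerivAt_cosh x)).sub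
        (Real.hasDerivAt_cosh x)).add_const 1).add ((hasDerivAt_pow 2 x).div_const 2)
      refine h.congr_deriv ?_; push_cast; ring)
    (fun x hx => by
      have h1 := sinh_sub_le x hx
      have h2 : 0 ≤ x^4/24 * Real.sinh x :=
        mul_nonneg (by positivity) (Real.sinh_nonneg_iff.2 hx)
      linarith) b hb
  linarith

private lemma one_add_sq_le_cosh (b : ℝ) : 1 + b^2/2 ≤ Real.cosh b := by
  wlog hb : 0 ≤ b with H
  · have := H (-b) (by linarith [le_of_not_ge hb])
    have h2 : (-b)^2 = b^2 := by ring
    rwa [Real.cosh_neg, h2] at this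
  have hs : ∀ x, 0 ≤ x → x ≤ Real.sinh x := fun x hx => Real.self_le_sinh_iff.2 hx
  have := nonneg_of_deriv (f := fun b => Real.cosh b - 1 - b^2/2)
    (f' := fun b => Real.sinh b - b) (by simp)
    (fun x => by
      have h := ((Real.hasDerivAt_cosh x).sub_const 1).sub ((hasDerivAt_pow 2 x).div_const 2)
      refine h.congr_deriv ?_; push_cast; ring)
    (fun x hx => by linarith [hs x hx]) b hb
  linarith

private lemma cosh_le_exp_abs (b : ℝ) : Real.cosh b ≤ Real.exp |b| := by
  rw [Real.cosh_eq]
  have h1 : Real.exp b ≤ Real.exp |b| := Real.exp_le_exp.2 (le_abs_self b)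
  have h2 : Real.exp (-b) ≤ Real.exp |b| := Real.exp_le_exp.2 (neg_le_abs b)
  linarith

private lemma exp_neg_quad_bounds (a : ℝ) (ha : 0 ≤ a) :
    1 - a ≤ Real.exp (-a) ∧ Real.exp (-a) ≤ 1 - a + a^2/2 := by
  constructor
  · linarith [Real.add_one_le_exp (-a)]
  · have := nonneg_of_deriv (f := fun a => 1 - a + a^2/2 - Real.exp (-a))
      (f' := fun a => -1 + a + Real.exp (-a)) (by simp)
      (fun x => by
        have h := (((hasDerivAt_const x (1:ℝ)).sub (hasDerivAt_id x)).add
          ((hasDerivAt_pow 2 x).div_const 2)).sub ((hasDerivAt_id x).neg.exp)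
        refine h.congr_deriv ?_; simp only [Pi.neg_apply, id_eq]; push_cast; ring)
      (fun x _ => by linarith [Real.add_one_le_exp (-x)]) a ha
    linarith

private lemma integrable_pow_gauss (n : ℕ) {b : ℝ} (hb : 0 < b) :
    Integrable fun x : ℝ => x ^ n * Real.exp (-b * x ^ 2) := by
  have h := integrable_rpow_mul_exp_neg_mul_sq hb (s := (n:ℝ)) (by exact lt_of_lt_of_le (by norm_num) (Nat.cast_nonneg n))
  have : (fun x : ℝ => x ^ (n:ℝ) * Real.exp (-b * x ^ 2))
      = fun x : ℝ => x ^ n * Real.exp (-b * x ^ 2) := by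
    funext x; rw [Real.rpow_natCast]
  rwa [this] at h

private lemma gauss_rec (n : ℕ) {b : ℝ} (hb : 0 < b) :
    (2*b) * ∫ x : ℝ, x ^ (n+2) * Real.exp (-b * x ^ 2)
      = (n+1 : ℝ) * ∫ x : ℝ, x ^ n * Real.exp (-b * x ^ 2) := by
  have key := integral_eq_zero_of_hasDerivAt_of_integrable
    (f := fun x : ℝ => x^(n+1) * Real.exp (-b*x^2))
    (f' := fun x : ℝ => (n+1 : ℝ) * (x^n * Real.exp (-b*x^2))
      - (2*b) * (x^(n+2) * Real.exp (-b*x^2)))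
    (fun x => by
      have h := (hasDerivAt_pow (n+1) x).mul (((hasDerivAt_pow 2 x).const_mul (-b)).exp)
      refine h.congr_deriv ?_
      push_cast
      ring)
    (((integrable_pow_gauss n hb).const_mul _).sub ((integrable_pow_gauss (n+2) hb).const_mul _))
    (integrable_pow_gauss (n+1) hb)
  rw [integral_sub ((integrable_pow_gauss n hb).const_mul _)
    ((integrable_pow_gauss (n+2) hb).const_mul _), integral_const_mul, integral_const_mul] at key
  linarith

private lemma gauss_M0 : ∫ x : ℝ, Real.exp (-(1/4:ℝ) * x ^ 2) = 2 * Real.sqrt π := by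
  rw [integral_gaussian]
  rw [show π / (1/4:ℝ) = 4 * π by ring]
  rw [show (4:ℝ) * π = 2^2 * π by norm_num, Real.sqrt_mul (by positivity), Real.sqrt_sq (by norm_num)]

private lemma gauss_M4 : ∫ x : ℝ, x^4 * Real.exp (-(1/4:ℝ) * x ^ 2) = 24 * Real.sqrt π := by
  have h0 := gauss_M0
  have h2 := gauss_rec 0 (b := (1/4:ℝ)) (by norm_num)
  have h4 := gauss_rec 2 (b := (1/4:ℝ)) (by norm_num)
  norm_num at h0 h2 h4 ⊢
  linarith

private lemma gauss_M6 : ∫ x : ℝ, x^6 * Real.exp (-(1/4:ℝ) * x ^ 2) = 240 * Real.sqrt π := by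
  have h4 := gauss_M4
  have h6 := gauss_rec 4 (b := (1/4:ℝ)) (by norm_num)
  norm_num at h4 h6 ⊢
  linarith

private lemma key_pointwise (s u : ℝ) :
    |Real.exp (-(u^2/4 + s*u^3/6 + s^2*u^4/24)) + Real.exp (-(u^2/4 - s*u^3/6 + s^2*u^4/24))
      - 2 * Real.exp (-(u^2/4)) * (1 - s^2*u^4/24 + s^2*u^6/72)|
      ≤ s^4 * ((u^8/576 + u^10/864 + u^12/15552) * Real.exp (-(u^2/12))) := by
  have ha : (0:ℝ) ≤ s^2*u^4/24 := by positivity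
  set a : ℝ := s^2*u^4/24 with ha_def
  set c : ℝ := s*u^3/6 with hc_def
  have e1 : Real.exp (-(u^2/4 + s*u^3/6 + s^2*u^4/24))
      = Real.exp (-(u^2/4)) * Real.exp (-a) * Real.exp (-c) := by
    rw [← Real.exp_add, ← Real.exp_add]; congr 1; rw [ha_def, hc_def]; ring
  have e2 : Real.exp (-(u^2/4 - s*u^3/6 + s^2*u^4/24))
      = Real.exp (-(u^2/4)) * Real.exp (-a) * Real.exp (c) := by
    rw [← Real.exp_add, ← Real.exp_add]; congr 1; rw [ha_def, hc_def]; ring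
  have hX : Real.exp (-(u^2/4 + s*u^3/6 + s^2*u^4/24))
        + Real.exp (-(u^2/4 - s*u^3/6 + s^2*u^4/24))
        - 2 * Real.exp (-(u^2/4)) * (1 - s^2*u^4/24 + s^2*u^6/72)
      = 2 * Real.exp (-(u^2/4)) * (Real.exp (-a) * Real.cosh c - (1 - a + c^2/2)) := by
    rw [e1, e2, Real.cosh_eq]
    have h72 : s^2*u^6/72 = c^2/2 := by rw [hc_def]; ring
    have h24 : s^2*u^4/24 = a := by rw [ha_def]
    rw [h72, h24]; ring
  rw [hX]
  have hexp := exp_neg_quad_bounds a ha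
  have hexp_le_one : Real.exp (-a) ≤ 1 := Real.exp_le_one_iff.2 (by linarith)
  have hcosh_lb := one_add_sq_le_cosh c
  have habs_c : |c| ≤ a + u^2/6 := by
    have h1 : |c| = |s| * |u|^3 / 6 := by
      rw [hc_def, abs_div, abs_mul, abs_pow]; norm_num
    rw [h1, ha_def]
    have h5 : |u|^2 = u^2 := sq_abs u
    have h6 : |u|^4 = u^4 := by rw [show (4:ℕ) = 2*2 from rfl, pow_mul, sq_abs, ← pow_mul]
    have h7 : |u|^3 = u ^ 2 * |u| := by rw [pow_succ, sq_abs]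
    have h8 : |s|^2 = s^2 := sq_abs s
    have hkey := sq_nonneg (|s| * |u| ^ 2 - 2 * |u|)
    have expand : (|s| * |u| ^ 2 - 2 * |u|)^2
        = |s|^2*(|u|^2)^2 - 4 * (|s| * (|u|^3)) + 4*(|u|^2) := by ring
    rw [expand, h8, h5] at hkey
    have hu4 : (u^2)^2 = u^4 := by ring
    rw [hu4] at hkey
    linarith
  have hprod : Real.exp (-a) * Real.cosh c ≤ Real.exp (u^2/6) := by
    calc Real.exp (-a) * Real.cosh c ≤ Real.exp (-a) * Real.exp |c| :=
          mul_le_mul_of_nonneg_left (cosh_le_exp_abs c) (Real.exp_pos _).le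
      _ = Real.exp (|c| - a) := by rw [← Real.exp_add]; congr 1; ring
      _ ≤ Real.exp (u^2/6) := Real.exp_le_exp.2 (by linarith)
  have hT1u : Real.exp (-a) * (Real.cosh c - 1 - c^2/2) ≤ c^4/24 * Real.exp (u^2/6) := by
    calc Real.exp (-a) * (Real.cosh c - 1 - c^2/2)
        ≤ Real.exp (-a) * (c^4/24 * Real.cosh c) :=
          mul_le_mul_of_nonneg_left (cosh_quad_remainder c) (Real.exp_pos _).le
      _ = c^4/24 * (Real.exp (-a) * Real.cosh c) := by ring
      _ ≤ c^4/24 * Real.exp (u^2/6) := mul_le_mul_of_nonneg_left hprod (by positivity)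
  have hT1l : 0 ≤ Real.exp (-a) * (Real.cosh c - 1 - c^2/2) :=
    mul_nonneg (Real.exp_pos _).le (by nlinarith [hcosh_lb])
  have hXabs : |Real.exp (-a) * Real.cosh c - (1 - a + c^2/2)|
      ≤ c^4/24 * Real.exp (u^2/6) + a^2/2 + a * (c^2/2) := by
    have hid : Real.exp (-a) * Real.cosh c - (1 - a + c^2/2)
        = Real.exp (-a) * (Real.cosh c - 1 - c^2/2) + (Real.exp (-a) - 1 + a)
          + (Real.exp (-a) - 1) * (c^2/2) := by ring
    rw [hid]
    have h2l : 0 ≤ Real.exp (-a) - 1 + a := by linarith [hexp.1]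
    have h2u : Real.exp (-a) - 1 + a ≤ a^2/2 := by linarith [hexp.2]
    have h3l : -(a * (c^2/2)) ≤ (Real.exp (-a) - 1) * (c^2/2) := by
      have := mul_le_mul_of_nonneg_right (show -a ≤ Real.exp (-a) - 1 by linarith [hexp.1])
        (show (0:ℝ) ≤ c^2/2 by positivity)
      linarith
    have h3u : (Real.exp (-a) - 1) * (c^2/2) ≤ 0 :=
      mul_nonpos_of_nonpos_of_nonneg (by linarith) (by positivity)
    rw [abs_le]
    constructor <;> linarith
  calc |2 * Real.exp (-(u^2/4)) * (Real.exp (-a) * Real.cosh c - (1 - a + c^2/2))|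
      = 2 * Real.exp (-(u^2/4)) * |Real.exp (-a) * Real.cosh c - (1 - a + c^2/2)| := by
        rw [abs_mul, abs_of_nonneg (by positivity : (0:ℝ) ≤ 2 * Real.exp (-(u^2/4)))]
    _ ≤ 2 * Real.exp (-(u^2/4)) * (c^4/24 * Real.exp (u^2/6) + a^2/2 + a * (c^2/2)) :=
        mul_le_mul_of_nonneg_left hXabs (by positivity)
    _ ≤ s^4 * ((u^8/576 + u^10/864 + u^12/15552) * Real.exp (-(u^2/12))) := by
        have hEE : Real.exp (-(u^2/4)) * Real.exp (u^2/6) = Real.exp (-(u^2/12)) := by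
          rw [← Real.exp_add]; congr 1; ring
        have hle : Real.exp (-(u^2/4)) ≤ Real.exp (-(u^2/12)) :=
          Real.exp_le_exp.2 (by linarith [sq_nonneg u])
        have hc4 : c^4 = s^4*u^12/1296 := by rw [hc_def]; ring
        have ha2 : a^2 = s^4*u^8/576 := by rw [ha_def]; ring
        have hac : a*(c^2/2) = s^4*u^10/1728 := by rw [ha_def, hc_def]; ring
        have hstep : 2 * Real.exp (-(u^2/4)) * (c^4/24 * Real.exp (u^2/6) + a^2/2 + a * (c^2/2))
            = s^4*u^12/15552 * Real.exp (-(u^2/12))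
              + (s^4*u^8/576 + s^4*u^10/864) * Real.exp (-(u^2/4)) := by
          rw [← hEE, hc4, ha2, hac]; ring
        rw [hstep]
        have hy : (0:ℝ) ≤ s^4*u^8/576 + s^4*u^10/864 := by positivity
        nlinarith [mul_le_mul_of_nonneg_left hle hy]

private noncomputable def Cerr : ℝ :=
  ∫ u : ℝ, (u^8/576 + u^10/864 + u^12/15552) * Real.exp (-(u^2/12))

private lemma integrable_h :
    Integrable (fun u : ℝ => (u^8/576 + u^10/864 + u^12/15552) * Real.exp (-(u^2/12))) := by
  have e : (fun u : ℝ => (u^8/576 + u^10/864 + u^12/15552) * Real.exp (-(u^2/12)))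
      = fun u : ℝ => (1/576) * (u^8 * Real.exp (-(1/12:ℝ)*u^2))
        + ((1/864) * (u^10 * Real.exp (-(1/12:ℝ)*u^2))
          + (1/15552) * (u^12 * Real.exp (-(1/12:ℝ)*u^2))) := by
    funext u
    rw [show -(u^2/12) = -(1/12:ℝ)*u^2 by ring]
    ring
  have i1 : Integrable (fun u : ℝ => (1/576) * (u^8 * Real.exp (-(1/12:ℝ)*u^2))) :=
    (integrable_pow_gauss 8 (b := (1/12:ℝ)) (by norm_num)).const_mul _
  have i2 : Integrable (fun u : ℝ => (1/864) * (u^10 * Real.exp (-(1/12:ℝ)*u^2))) :=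
    (integrable_pow_gauss 10 (b := (1/12:ℝ)) (by norm_num)).const_mul _
  have i3 : Integrable (fun u : ℝ => (1/15552) * (u^12 * Real.exp (-(1/12:ℝ)*u^2))) :=
    (integrable_pow_gauss 12 (b := (1/12:ℝ)) (by norm_num)).const_mul _
  rw [e]
  exact i1.add (i2.add i3)

private lemma Cerr_nonneg : 0 ≤ Cerr :=
  integral_nonneg fun u => by positivity

private lemma integrable_f (s : ℝ) :
    Integrable (fun u : ℝ => Real.exp (-(u^2/4 + s*u^3/6 + s^2*u^4/24))) := by
  refine Integrable.mono' (g := fun u : ℝ => Real.exp (-(1/12:ℝ)*u^2))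
    (integrable_exp_neg_mul_sq (b := (1/12:ℝ)) (by norm_num)) ?_ ?_
  · apply Continuous.aestronglyMeasurable
    fun_prop
  · refine ae_of_all _ fun u => ?_
    rw [Real.norm_eq_abs, abs_of_pos (Real.exp_pos _)]
    apply Real.exp_le_exp.2
    nlinarith [sq_nonneg (s*u^2 + 2*u)]

private lemma integrable_fneg (s : ℝ) :
    Integrable (fun u : ℝ => Real.exp (-(u^2/4 - s*u^3/6 + s^2*u^4/24))) := by
  have e : (fun u : ℝ => Real.exp (-(u^2/4 - s*u^3/6 + s^2*u^4/24)))
      = fun u : ℝ => Real.exp (-(u^2/4 + (-s)*u^3/6 + (-s)^2*u^4/24)) := by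
    funext u; congr 1; ring
  rw [e]; exact integrable_f (-s)

private lemma integrable_g (s : ℝ) :
    Integrable (fun u : ℝ => 2 * Real.exp (-(u^2/4)) * (1 - s^2*u^4/24 + s^2*u^6/72)) := by
  have e : (fun u : ℝ => 2 * Real.exp (-(u^2/4)) * (1 - s^2*u^4/24 + s^2*u^6/72))
      = fun u : ℝ => 2 * Real.exp (-(1/4:ℝ)*u^2)
        + ((-(s^2/12)) * (u^4 * Real.exp (-(1/4:ℝ)*u^2))
          + (s^2/36) * (u^6 * Real.exp (-(1/4:ℝ)*u^2))) := by
    funext u; rw [show -(u^2/4) = -(1/4:ℝ)*u^2 by ring]; ring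
  have i1 : Integrable (fun u : ℝ => 2 * Real.exp (-(1/4:ℝ)*u^2)) :=
    (integrable_exp_neg_mul_sq (b := (1/4:ℝ)) (by norm_num)).const_mul 2
  have i2 : Integrable (fun u : ℝ => (-(s^2/12)) * (u^4 * Real.exp (-(1/4:ℝ)*u^2))) :=
    (integrable_pow_gauss 4 (b := (1/4:ℝ)) (by norm_num)).const_mul _
  have i3 : Integrable (fun u : ℝ => (s^2/36) * (u^6 * Real.exp (-(1/4:ℝ)*u^2))) :=
    (integrable_pow_gauss 6 (b := (1/4:ℝ)) (by norm_num)).const_mul _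
  rw [e]
  exact i1.add (i2.add i3)

private lemma integral_g (s : ℝ) :
    (∫ u : ℝ, 2 * Real.exp (-(u^2/4)) * (1 - s^2*u^4/24 + s^2*u^6/72))
      = 4 * Real.sqrt π * (1 + 7*s^2/6) := by
  have e : (fun u : ℝ => 2 * Real.exp (-(u^2/4)) * (1 - s^2*u^4/24 + s^2*u^6/72))
      = fun u : ℝ => 2 * Real.exp (-(1/4:ℝ)*u^2)
        + ((-(s^2/12)) * (u^4 * Real.exp (-(1/4:ℝ)*u^2))
          + (s^2/36) * (u^6 * Real.exp (-(1/4:ℝ)*u^2))) := by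
    funext u; rw [show -(u^2/4) = -(1/4:ℝ)*u^2 by ring]; ring
  have i1 : Integrable (fun u : ℝ => 2 * Real.exp (-(1/4:ℝ)*u^2)) :=
    (integrable_exp_neg_mul_sq (b := (1/4:ℝ)) (by norm_num)).const_mul 2
  have i2 : Integrable (fun u : ℝ => (-(s^2/12)) * (u^4 * Real.exp (-(1/4:ℝ)*u^2))) :=
    (integrable_pow_gauss 4 (b := (1/4:ℝ)) (by norm_num)).const_mul _
  have i3 : Integrable (fun u : ℝ => (s^2/36) * (u^6 * Real.exp (-(1/4:ℝ)*u^2))) :=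
    (integrable_pow_gauss 6 (b := (1/4:ℝ)) (by norm_num)).const_mul _
  have i23 : Integrable (fun u : ℝ => (-(s^2/12)) * (u^4 * Real.exp (-(1/4:ℝ)*u^2))
      + (s^2/36) * (u^6 * Real.exp (-(1/4:ℝ)*u^2))) := i2.add i3
  rw [e, integral_add i1 i23, integral_add i2 i3, integral_const_mul, integral_const_mul,
    integral_const_mul, gauss_M0, gauss_M4, gauss_M6]
  ring

private lemma J_symm (s : ℝ) :
    (∫ u : ℝ, (Real.exp (-(u^2/4 + s*u^3/6 + s^2*u^4/24))
      + Real.exp (-(u^2/4 - s*u^3/6 + s^2*u^4/24))))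
    = 2 * ∫ u : ℝ, Real.exp (-(u^2/4 + s*u^3/6 + s^2*u^4/24)) := by
  rw [integral_add (integrable_f s) (integrable_fneg s)]
  have hneg : (∫ u : ℝ, Real.exp (-(u^2/4 - s*u^3/6 + s^2*u^4/24)))
      = ∫ u : ℝ, Real.exp (-(u^2/4 + s*u^3/6 + s^2*u^4/24)) := by
    have h := Measure.integral_comp_mul_left
      (fun u : ℝ => Real.exp (-(u^2/4 + s*u^3/6 + s^2*u^4/24))) (-1)
    simp only [neg_one_mul] at h
    rw [show |((-1:ℝ))⁻¹| = 1 by norm_num, one_smul] at h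
    rw [← h]
    congr 1; funext x; congr 1; ring
  rw [hneg]; ring

private lemma J_est (s : ℝ) :
    |(∫ u : ℝ, Real.exp (-(u^2/4 + s*u^3/6 + s^2*u^4/24))) - 2 * Real.sqrt π * (1 + 7*s^2/6)|
      ≤ s^4 * Cerr / 2 := by
  have hsub : (∫ u : ℝ, (Real.exp (-(u^2/4 + s*u^3/6 + s^2*u^4/24))
        + Real.exp (-(u^2/4 - s*u^3/6 + s^2*u^4/24))
        - 2 * Real.exp (-(u^2/4)) * (1 - s^2*u^4/24 + s^2*u^6/72)))
      = 2 * (∫ u : ℝ, Real.exp (-(u^2/4 + s*u^3/6 + s^2*u^4/24)))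
        - 4 * Real.sqrt π * (1 + 7*s^2/6) := by
    have hadd : Integrable (fun u : ℝ => Real.exp (-(u^2/4 + s*u^3/6 + s^2*u^4/24))
        + Real.exp (-(u^2/4 - s*u^3/6 + s^2*u^4/24))) := (integrable_f s).add (integrable_fneg s)
    rw [integral_sub hadd (integrable_g s), J_symm s, integral_g s]
  have hbound : ‖∫ u : ℝ, (Real.exp (-(u^2/4 + s*u^3/6 + s^2*u^4/24))
        + Real.exp (-(u^2/4 - s*u^3/6 + s^2*u^4/24))
        - 2 * Real.exp (-(u^2/4)) * (1 - s^2*u^4/24 + s^2*u^6/72))‖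
      ≤ ∫ u : ℝ, s^4 * ((u^8/576 + u^10/864 + u^12/15552) * Real.exp (-(u^2/12))) := by
    apply norm_integral_le_of_norm_le (integrable_h.const_mul _)
    exact ae_of_all _ fun u => by rw [Real.norm_eq_abs]; exact key_pointwise s u
  rw [hsub, integral_const_mul, Real.norm_eq_abs] at hbound
  have hCdef : Cerr = ∫ u : ℝ, (u^8/576 + u^10/864 + u^12/15552) * Real.exp (-(u^2/12)) := rfl
  rw [← hCdef] at hbound
  rw [abs_le] at hbound ⊢
  constructor
  · linarith [hbound.1]
  · linarith [hbound.2]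

/-- The Pearcey-like integral `𝒫(θ) = ∫_ℝ exp(-θ(y²/4 + y³/6 + y⁴/24)) dy`. -/
noncomputable def Pearcey (θ : ℝ) : ℝ :=
  ∫ y : ℝ, Real.exp (-θ * (y^2/4 + y^3/6 + y^4/24))

private lemma pearcey_eq (θ : ℝ) (hθ : 0 < θ) :
    Pearcey θ = (Real.sqrt θ)⁻¹
      * ∫ u : ℝ, Real.exp (-(u^2/4 + (Real.sqrt θ)⁻¹*u^3/6 + ((Real.sqrt θ)⁻¹)^2*u^4/24)) := by
  have hsq : (0:ℝ) < Real.sqrt θ := Real.sqrt_pos.2 hθ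
  have hθs : θ * ((Real.sqrt θ)⁻¹)^2 = 1 := by
    rw [← Real.sq_sqrt hθ.le]; field_simp; rw [Real.sqrt_sq hsq.le]
  have h := Measure.integral_comp_mul_left
    (fun y : ℝ => Real.exp (-θ * (y^2/4 + y^3/6 + y^4/24))) ((Real.sqrt θ)⁻¹)
  rw [inv_inv, abs_of_pos hsq, smul_eq_mul] at h
  have e : ∀ x : ℝ, Real.exp (-θ * (((Real.sqrt θ)⁻¹*x)^2/4 + ((Real.sqrt θ)⁻¹*x)^3/6
        + ((Real.sqrt θ)⁻¹*x)^4/24))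
      = Real.exp (-(x^2/4 + (Real.sqrt θ)⁻¹*x^3/6 + ((Real.sqrt θ)⁻¹)^2*x^4/24)) := by
    intro x; congr 1
    linear_combination (-(x^2/4) - (Real.sqrt θ)⁻¹*x^3/6 - ((Real.sqrt θ)⁻¹)^2*x^4/24) * hθs
  simp_rw [e] at h
  simp only [Pearcey]
  rw [h, ← mul_assoc, inv_mul_cancel₀ hsq.ne', one_mul]

/-- **eq. (asy).** Asymptotics of the Pearcey-like integral: as `θ → ∞`,
`𝒫(θ) = √(4π/θ)(1 + 7/(6θ) + O(θ⁻²))`. -/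
theorem stmt_14 :
    (fun θ : ℝ => Pearcey θ - Real.sqrt (4 * Real.pi / θ) * (1 + 7 / (6 * θ)))
      =O[Filter.atTop] (fun θ : ℝ => Real.sqrt (4 * Real.pi / θ) * θ ^ (-(2:ℝ))) := by
  have hsπ : (0:ℝ) < Real.sqrt π := Real.sqrt_pos.2 Real.pi_pos
  rw [isBigO_iff]
  refine ⟨Cerr / (4 * Real.sqrt π), ?_⟩
  filter_upwards [eventually_gt_atTop (0:ℝ)] with θ hθ
  have hsq : (0:ℝ) < Real.sqrt θ := Real.sqrt_pos.2 hθ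
  rw [pearcey_eq θ hθ]
  set s : ℝ := (Real.sqrt θ)⁻¹ with hs_def
  have hs_pos : 0 < s := inv_pos.2 hsq
  have hs2 : s^2 = θ⁻¹ := by rw [hs_def, inv_pow, Real.sq_sqrt hθ.le]
  have hsqrt4 : Real.sqrt (4 * π / θ) = 2 * Real.sqrt π * s := by
    rw [show 4 * π / θ = (2:ℝ)^2 * π * θ⁻¹ by ring]
    rw [Real.sqrt_mul (by positivity) θ⁻¹, Real.sqrt_mul (by positivity) π,
      Real.sqrt_sq (by norm_num)]
    rw [hs_def, ← Real.sqrt_inv]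
  have h7 : 7 / (6*θ) = 7 * s^2 / 6 := by rw [hs2]; ring
  have hrpow : θ ^ (-(2:ℝ)) = s^4 := by
    rw [show s^4 = (s^2)^2 by ring, hs2, inv_pow, Real.rpow_neg hθ.le,
      show ((2:ℝ)) = ((2:ℕ):ℝ) by norm_num, Real.rpow_natCast]
  rw [hsqrt4, h7, hrpow, Real.norm_eq_abs, Real.norm_eq_abs]
  have hJ := J_est s
  have hpos2 : (0:ℝ) < 2 * Real.sqrt π * s * s^4 :=
    mul_pos (mul_pos (by positivity) hs_pos) (pow_pos hs_pos 4)
  have hfold : s * (∫ u : ℝ, Real.exp (-(u^2/4 + s*u^3/6 + s^2*u^4/24)))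
        - 2 * Real.sqrt π * s * (1 + 7 * s^2 / 6)
      = s * ((∫ u : ℝ, Real.exp (-(u^2/4 + s*u^3/6 + s^2*u^4/24)))
        - 2 * Real.sqrt π * (1 + 7*s^2/6)) := by ring
  rw [hfold, abs_mul, abs_of_pos hs_pos]
  calc s * |(∫ u : ℝ, Real.exp (-(u^2/4 + s*u^3/6 + s^2*u^4/24)))
        - 2 * Real.sqrt π * (1 + 7*s^2/6)|
      ≤ s * (s^4 * Cerr / 2) := mul_le_mul_of_nonneg_left hJ hs_pos.le
    _ = Cerr / (4 * Real.sqrt π) * (2 * Real.sqrt π * s * s^4) := by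
        field_simp; ring
    _ = Cerr / (4 * Real.sqrt π) * |2 * Real.sqrt π * s * s^4| := by
        rw [abs_of_pos hpos2]
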